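/- arXiv:1005.3741 — 3 statements merged into one kernel-verified Lean document; each statement's English description precedes it below -/
import Mathlib

section
/- Let T > 0 and g₂ ∈ ℝ, and let u : ℝ → ℝ be continuously differentiable and T-periodic. For λ > 0 define u_λ(x) = u(λx), which is (T/λ)-periodic. Then for every λ > 0 one has the identity H_{T/λ}(u_λ) = H_T(u) − ((λ² − 1)/(32T))·∫₀ᵀ u'(x)² dx; in particular λ ↦ H_{T/λ}(u_λ) is differentiable at λ = 1 with derivative −(1/(16T))·∫₀ᵀ u'(x)² dx, and this derivative is nonzero (indeed strictly negative) whenever u is non-constant. (Hence the variational problem for the KdV functional with variable period has no smooth non-constant real solutions.) -/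
/-- For `T > 0` and `g₂ ∈ ℝ`, the KdV functional
`H_T(u) = (1/T) ∫₀ᵀ (-(u'² + 2u³)/32 + (g₂/16) u) dx` on `T`-periodic functions. -/
noncomputable def kdvFunctional (T g₂ : ℝ) (u : ℝ → ℝ) : ℝ :=
  (1 / T) * ∫ x in (0:ℝ)..T,
    (-((deriv u x) ^ 2 + 2 * (u x) ^ 3) / 32 + (g₂ / 16) * u x)

/-- Rescaling identity for the KdV functional with variable period: for `u` continuously
differentiable and `T`-periodic and `u_l (x) = u (l x)` (which is `T/l`-periodic),
`H_{T/l}(u_l) = H_T(u) - ((l² - 1)/(32 T)) ∫₀ᵀ u'(x)² dx` for every `l > 0`;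
in particular `l ↦ H_{T/l}(u_l)` is differentiable at `l = 1` with derivative
`-(1/(16T)) ∫₀ᵀ u'(x)² dx`, which is strictly negative whenever `u` is non-constant. -/
theorem kdv_variable_period (T g₂ : ℝ) (hT : 0 < T) (u : ℝ → ℝ)
    (hu : ContDiff ℝ 1 u) (hu_per : ∀ x, u (x + T) = u x) :
    (∀ l : ℝ, 0 < l →
        ((∀ x : ℝ, u (l * (x + T / l)) = u (l * x)) ∧
          kdvFunctional (T / l) g₂ (fun x => u (l * x)) =
            kdvFunctional T g₂ u -
              ((l ^ 2 - 1) / (32 * T)) * ∫ x in (0:ℝ)..T, (deriv u x) ^ 2)) ∧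
    HasDerivAt (fun l : ℝ => kdvFunctional (T / l) g₂ (fun x => u (l * x)))
      (-(1 / (16 * T)) * ∫ x in (0:ℝ)..T, (deriv u x) ^ 2) 1 ∧
    ((¬ ∃ c : ℝ, ∀ x : ℝ, u x = c) →
      -(1 / (16 * T)) * ∫ x in (0:ℝ)..T, (deriv u x) ^ 2 < 0) := by
  have hT' : T ≠ 0 := hT.ne'
  have hud : Differentiable ℝ u := hu.differentiable one_ne_zero
  have hucont : Continuous u := hu.continuous
  have hdc : Continuous (deriv u) := hu.continuous_deriv le_rfl
  set I : ℝ := ∫ x in (0:ℝ)..T, (deriv u x) ^ 2 with hI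
  set F : ℝ → ℝ := fun y => -((deriv u y) ^ 2 + 2 * (u y) ^ 3) / 32 + (g₂ / 16) * u y with hF
  have hFc : Continuous F := by
    fun_prop
  have hPc : Continuous (fun y : ℝ => (deriv u y) ^ 2) := hdc.pow 2
  -- main rescaling identity
  have main : ∀ l : ℝ, 0 < l →
      ((∀ x : ℝ, u (l * (x + T / l)) = u (l * x)) ∧
        kdvFunctional (T / l) g₂ (fun x => u (l * x)) =
          kdvFunctional T g₂ u - ((l ^ 2 - 1) / (32 * T)) * I) := by
    intro l hl
    have hl' : l ≠ 0 := hl.ne'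
    constructor
    · intro x
      have : l * (x + T / l) = l * x + T := by field_simp
      rw [this, hu_per]
    · have hd : ∀ x : ℝ, HasDerivAt (fun x => u (l * x)) (l * deriv u (l * x)) x := by
        intro x
        have h1 : HasDerivAt (fun x : ℝ => l * x) l x := by
          simpa using (hasDerivAt_id x).const_mul l
        have := (hud (l * x)).hasDerivAt.comp x h1
        rw [mul_comm (deriv u (l * x)) l] at this
        exact this
      have hdfun : deriv (fun x => u (l * x)) = fun x => l * deriv u (l * x) :=
        funext fun x => (hd x).deriv
      set G : ℝ → ℝ := fun y =>
        -((l * deriv u y) ^ 2 + 2 * (u y) ^ 3) / 32 + (g₂ / 16) * u y with hG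
      have hGc : Continuous G := by fun_prop
      have step1 : kdvFunctional (T / l) g₂ (fun x => u (l * x)) =
          (1 / (T / l)) * ∫ x in (0:ℝ)..(T / l), G (l * x) := by
        unfold kdvFunctional
        rw [hdfun]
      have step2 : (∫ x in (0:ℝ)..(T / l), G (l * x)) = l⁻¹ * ∫ y in (0:ℝ)..T, G y := by
        rw [intervalIntegral.integral_comp_mul_left G hl']
        simp [mul_div_cancel₀ T hl', smul_eq_mul]
      have hGF : ∀ y, G y = F y - ((l ^ 2 - 1) / 32) * (deriv u y) ^ 2 := by
        intro y; simp only [hG, hF]; ring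
      have step3 : (∫ y in (0:ℝ)..T, G y) =
          (∫ y in (0:ℝ)..T, F y) - ((l ^ 2 - 1) / 32) * I := by
        simp only [hGF]
        rw [intervalIntegral.integral_sub (hFc.intervalIntegrable 0 T)
          ((hPc.intervalIntegrable 0 T).const_mul _),
          intervalIntegral.integral_const_mul]
      rw [step1, step2, step3]
      unfold kdvFunctional
      simp only [← hF]
      field_simp
  refine ⟨main, ?_, ?_⟩
  · -- derivative at l = 1
    have hg : HasDerivAt
        (fun l : ℝ => kdvFunctional T g₂ u - ((l ^ 2 - 1) / (32 * T)) * I)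
        (-(1 / (16 * T)) * I) 1 := by
      have h1 : HasDerivAt (fun l : ℝ => l ^ 2) 2 1 := by
        simpa using hasDerivAt_pow 2 (1 : ℝ)
      have h2 := (((h1.sub_const 1).div_const (32 * T)).mul_const I).const_sub
        (kdvFunctional T g₂ u)
      exact h2.congr_deriv (by ring)
    refine hg.congr_of_eventuallyEq ?_
    filter_upwards [eventually_gt_nhds (by norm_num : (0:ℝ) < 1)] with l hl
    exact (main l hl).2
  · -- strict negativity for non-constant u
    intro hnc
    have hex : ∃ x₁ : ℝ, deriv u x₁ ≠ 0 := by
      by_contra h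
      push_neg at h
      exact hnc ⟨u 0, fun x => is_const_of_deriv_eq_zero hud h x 0⟩
    obtain ⟨x₁, hx₁⟩ := hex
    -- deriv u is T-periodic
    have hdper : Function.Periodic (deriv u) T := by
      intro x
      have h1 : HasDerivAt (fun y => u (y + T)) (deriv u (x + T)) x := by
        have := (hud (x + T)).hasDerivAt.comp x ((hasDerivAt_id x).add_const T)
        rw [mul_one] at this
        exact this
      have h2 : HasDerivAt u (deriv u (x + T)) x := by
        have : (fun y => u (y + T)) = u := funext hu_per
        rwa [this] at h1
      rw [h2.deriv]
    obtain ⟨x₀, hx₀mem, hx₀eq⟩ := hdper.exists_mem_Ico₀ hT x₁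
    have hx₀ : deriv u x₀ ≠ 0 := by rw [← hx₀eq]; exact hx₁
    have hpos : 0 < (deriv u x₀) ^ 2 := sq_pos_of_ne_zero hx₀
    -- get a small interval where (deriv u)^2 > 0
    have hev : ∀ᶠ y in nhds x₀, 0 < (deriv u y) ^ 2 :=
      (hPc.tendsto x₀).eventually (eventually_gt_nhds hpos)
    obtain ⟨ε, hε, hball⟩ := Metric.eventually_nhds_iff.mp hev
    obtain ⟨hx₀0, hx₀T⟩ := hx₀mem
    set b : ℝ := min (x₀ + ε) T with hb
    have hx₀b : x₀ < b := lt_min (by linarith) hx₀T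
    have hbT : b ≤ T := min_le_right _ _
    have hmid : 0 < ∫ y in x₀..b, (deriv u y) ^ 2 := by
      apply intervalIntegral.intervalIntegral_pos_of_pos_on
        (hPc.intervalIntegrable _ _) _ hx₀b
      intro y hy
      apply hball
      rw [Real.dist_eq, abs_lt]
      constructor
      · linarith [hy.1]
      · have : y < x₀ + ε := lt_of_lt_of_le hy.2 (min_le_left _ _)
        linarith
    have hIpos : 0 < I := by
      have hsplit : (∫ y in (0:ℝ)..x₀, (deriv u y) ^ 2) +
          ((∫ y in x₀..b, (deriv u y) ^ 2) + ∫ y in b..T, (deriv u y) ^ 2) = I := by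
        rw [intervalIntegral.integral_add_adjacent_intervals
          (hPc.intervalIntegrable _ _) (hPc.intervalIntegrable _ _),
          intervalIntegral.integral_add_adjacent_intervals
          (hPc.intervalIntegrable _ _) (hPc.intervalIntegrable _ _)]
      have h1 : 0 ≤ ∫ y in (0:ℝ)..x₀, (deriv u y) ^ 2 :=
        intervalIntegral.integral_nonneg hx₀0 (fun y _ => sq_nonneg _)
      have h2 : 0 ≤ ∫ y in b..T, (deriv u y) ^ 2 :=
        intervalIntegral.integral_nonneg hbT (fun y _ => sq_nonneg _)
      linarith
    have : 0 < 1 / (16 * T) := by positivity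
    nlinarith
end

section
/- Let T > 0 and let u : ℝ × ℝ → ℝ be smooth, with u(t, x + T) = u(t, x) for all t, x, and suppose u satisfies the KdV equation 4·∂ₜu = 6·u·∂ₓu − ∂ₓ³u. Then the function t ↦ ∫₀ᵀ u(t, x)² dx is constant. (Conservation of the KdV integral H₁.) -/
open Function MeasureTheory Metric Set

noncomputable def KdVpx (u : ℝ → ℝ → ℝ) : ℝ → ℝ → ℝ :=
  fun t x => fderiv ℝ (uncurry u) (t, x) (0, 1)

noncomputable def KdVpt (u : ℝ → ℝ → ℝ) : ℝ → ℝ → ℝ :=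
  fun t x => fderiv ℝ (uncurry u) (t, x) (1, 0)

lemma KdV.hasDerivAt_px {u : ℝ → ℝ → ℝ} (hu : ContDiff ℝ (⊤ : ℕ∞) (uncurry u)) (t x : ℝ) :
    HasDerivAt (u t) (KdVpx u t x) x := by
  have h1 : HasDerivAt (fun x : ℝ => ((t, x) : ℝ × ℝ)) ((0 : ℝ), (1 : ℝ)) x :=
    (hasDerivAt_const x t).prodMk (hasDerivAt_id x)
  exact ((hu.differentiable (by simp) (t, x)).hasFDerivAt).comp_hasDerivAt x h1

lemma KdV.hasDerivAt_pt {u : ℝ → ℝ → ℝ} (hu : ContDiff ℝ (⊤ : ℕ∞) (uncurry u)) (t x : ℝ) :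
    HasDerivAt (fun s => u s x) (KdVpt u t x) t := by
  have h1 : HasDerivAt (fun s : ℝ => ((s, x) : ℝ × ℝ)) ((1 : ℝ), (0 : ℝ)) t :=
    (hasDerivAt_id t).prodMk (hasDerivAt_const t x)
  exact ((hu.differentiable (by simp) (t, x)).hasFDerivAt).comp_hasDerivAt t h1

lemma KdV.contDiff_px {u : ℝ → ℝ → ℝ} (hu : ContDiff ℝ (⊤ : ℕ∞) (uncurry u)) :
    ContDiff ℝ (⊤ : ℕ∞) (uncurry (KdVpx u)) := by
  have h : ContDiff ℝ (⊤ : ℕ∞) (fderiv ℝ (uncurry u)) := hu.fderiv_right (mod_cast le_top)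
  have := (ContinuousLinearMap.apply ℝ ℝ (((0 : ℝ), (1 : ℝ)) : ℝ × ℝ)).contDiff.comp h
  exact this

lemma KdV.contDiff_pt {u : ℝ → ℝ → ℝ} (hu : ContDiff ℝ (⊤ : ℕ∞) (uncurry u)) :
    ContDiff ℝ (⊤ : ℕ∞) (uncurry (KdVpt u)) := by
  have h : ContDiff ℝ (⊤ : ℕ∞) (fderiv ℝ (uncurry u)) := hu.fderiv_right (mod_cast le_top)
  have := (ContinuousLinearMap.apply ℝ ℝ (((1 : ℝ), (0 : ℝ)) : ℝ × ℝ)).contDiff.comp h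
  exact this

lemma KdV.px_eq_deriv {u : ℝ → ℝ → ℝ} (hu : ContDiff ℝ (⊤ : ℕ∞) (uncurry u)) (t : ℝ) :
    deriv (u t) = KdVpx u t :=
  funext fun x => (KdV.hasDerivAt_px hu t x).deriv

lemma KdV.periodic_px {u : ℝ → ℝ → ℝ} (hu : ContDiff ℝ (⊤ : ℕ∞) (uncurry u)) {T : ℝ}
    (hper : ∀ t x, u t (x + T) = u t x) (t x : ℝ) :
    KdVpx u t (x + T) = KdVpx u t x := by
  rw [← KdV.px_eq_deriv hu, ← deriv_comp_add_const]
  have : (fun y => u t (y + T)) = u t := funext fun y => hper t y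
  rw [this, KdV.px_eq_deriv hu]

/-- Conservation of the KdV integral `H₁`: if `u(t,x)` is smooth, `T`-periodic in `x`,
and satisfies the KdV equation `4 ∂ₜu = 6 u ∂ₓu - ∂ₓ³u`, then `t ↦ ∫₀ᵀ u(t,x)² dx`
is constant. -/
theorem kdv_conservation_H1 (T : ℝ) (hT : 0 < T) (u : ℝ → ℝ → ℝ)
    (hu : ContDiff ℝ (⊤ : ℕ∞) (Function.uncurry u))
    (hper : ∀ t x, u t (x + T) = u t x)
    (hkdv : ∀ t x, 4 * deriv (fun s => u s x) t =
      6 * u t x * deriv (u t) x - deriv (deriv (deriv (u t))) x) :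
    ∀ t₁ t₂ : ℝ, (∫ x in (0:ℝ)..T, (u t₁ x) ^ 2) = ∫ x in (0:ℝ)..T, (u t₂ x) ^ 2 := by
  set u1 := KdVpx u with hu1
  have hcu1 : ContDiff ℝ (⊤ : ℕ∞) (uncurry u1) := KdV.contDiff_px hu
  set u2 := KdVpx u1 with hu2
  have hcu2 : ContDiff ℝ (⊤ : ℕ∞) (uncurry u2) := KdV.contDiff_px hcu1
  set u3 := KdVpx u2 with hu3
  have hcu3 : ContDiff ℝ (⊤ : ℕ∞) (uncurry u3) := KdV.contDiff_px hcu2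
  set ut := KdVpt u with hut
  have hcut : ContDiff ℝ (⊤ : ℕ∞) (uncurry ut) := KdV.contDiff_pt hu
  -- rewrite the KdV equation in terms of u1, u2, u3, ut
  have hkdv' : ∀ t x, 4 * ut t x = 6 * u t x * u1 t x - u3 t x := by
    intro t x
    have h1 : deriv (u t) = u1 t := KdV.px_eq_deriv hu t
    have h2 : deriv (u1 t) = u2 t := KdV.px_eq_deriv hcu1 t
    have h3 : deriv (u2 t) = u3 t := KdV.px_eq_deriv hcu2 t
    have h4 : deriv (fun s => u s x) t = ut t x := (KdV.hasDerivAt_pt hu t x).deriv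
    have := hkdv t x
    rw [h1, h2, h3, h4] at this
    exact this
  -- periodicity of derivatives
  have hper1 : ∀ t x, u1 t (x + T) = u1 t x := KdV.periodic_px hu hper
  have hper2 : ∀ t x, u2 t (x + T) = u2 t x := KdV.periodic_px hcu1 hper1
  -- key derivative-under-the-integral and vanishing
  have key : ∀ t₀ : ℝ, HasDerivAt (fun t => ∫ x in (0:ℝ)..T, (u t x) ^ 2) 0 t₀ := by
    intro t₀
    -- continuity helpers
    have hcU : Continuous (uncurry u) := hu.continuous
    have hcUT : Continuous (uncurry ut) := hcut.continuous
    have hFcont : ∀ t, Continuous (fun x => 2 * u t x * ut t x) := by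
      intro t
      have h1 : Continuous (fun x => u t x) :=
        hcU.comp (continuous_const.prodMk continuous_id)
      have h2 : Continuous (fun x => ut t x) :=
        hcUT.comp (continuous_const.prodMk continuous_id)
      exact (continuous_const.mul h1).mul h2
    -- bound on compact set
    obtain ⟨C, hC⟩ : ∃ C, ∀ p ∈ (closedBall t₀ 1 ×ˢ uIcc (0:ℝ) T),
        ‖2 * u p.1 p.2 * ut p.1 p.2‖ ≤ C := by
      have hcomp : IsCompact (closedBall t₀ 1 ×ˢ uIcc (0:ℝ) T) :=
        (isCompact_closedBall _ _).prod isCompact_uIcc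
      have hcg : ContinuousOn (fun p : ℝ × ℝ => 2 * u p.1 p.2 * ut p.1 p.2)
          (closedBall t₀ 1 ×ˢ uIcc (0:ℝ) T) :=
        ((continuous_const.mul hcU).mul hcUT).continuousOn
      exact hcomp.exists_bound_of_continuousOn hcg
    have main := intervalIntegral.hasDerivAt_integral_of_dominated_loc_of_deriv_le
      (F := fun t x => (u t x) ^ 2) (F' := fun t x => 2 * u t x * ut t x)
      (bound := fun _ => C) (μ := volume) (a := 0) (b := T) (x₀ := t₀)
      (s := ball t₀ 1) (ball_mem_nhds t₀ one_pos)
      (Filter.Eventually.of_forall (fun t =>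
        (((hcU.comp (continuous_const.prodMk continuous_id)).pow 2).aestronglyMeasurable)))
      ((((hcU.comp (continuous_const.prodMk continuous_id)).pow 2)).intervalIntegrable 0 T)
      ((hFcont t₀).aestronglyMeasurable)
      (Filter.Eventually.of_forall (fun x hx t ht => by
        exact hC (t, x) ⟨ball_subset_closedBall ht, uIoc_subset_uIcc hx⟩))
      (intervalIntegrable_const)
      (Filter.Eventually.of_forall (fun x _ t _ => by
        have := (KdV.hasDerivAt_pt hu t x).pow 2
        simpa [Pi.pow_def, mul_comm, mul_assoc, mul_left_comm] using this))
    have hzero : (∫ x in (0:ℝ)..T, 2 * u t₀ x * ut t₀ x) = 0 := by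
      have hderivG : ∀ x ∈ uIcc (0:ℝ) T,
          HasDerivAt (fun y => (u t₀ y) ^ 3 - u t₀ y * u2 t₀ y / 2 + (u1 t₀ y) ^ 2 / 4)
            (2 * u t₀ x * ut t₀ x) x := by
        intro x _
        have h0 : HasDerivAt (u t₀) (u1 t₀ x) x := KdV.hasDerivAt_px hu t₀ x
        have h1 : HasDerivAt (u1 t₀) (u2 t₀ x) x := KdV.hasDerivAt_px hcu1 t₀ x
        have h2 : HasDerivAt (u2 t₀) (u3 t₀ x) x := KdV.hasDerivAt_px hcu2 t₀ x
        have hG := ((h0.pow 3).sub ((h0.mul h2).div_const 2)).add ((h1.pow 2).div_const 4)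
        convert hG using 1
        · rfl
        · rfl
        · rfl
        have hk := hkdv' t₀ x
        push_cast
        linear_combination (u t₀ x / 2) * hk
      have hint : IntervalIntegrable (fun x => 2 * u t₀ x * ut t₀ x) volume 0 T :=
        (hFcont t₀).intervalIntegrable 0 T
      rw [intervalIntegral.integral_eq_sub_of_hasDerivAt hderivG hint]
      have : (T : ℝ) = 0 + T := by ring
      rw [this, hper t₀ 0, hper1 t₀ 0, hper2 t₀ 0]
      ring
    have h2 := main.2
    rw [hzero] at h2
    exact h2
  intro t₁ t₂
  exact is_const_of_deriv_eq_zero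
    (fun t => ((key t).differentiableAt)) (fun t => (key t).deriv) t₁ t₂
end

section
/- Let T > 0 and let u : ℝ × ℝ → ℝ be smooth, with u(t, x + T) = u(t, x) for all t, x, and suppose u satisfies the KdV equation 4·∂ₜu = 6·u·∂ₓu − ∂ₓ³u. Then the function t ↦ ∫₀ᵀ ( (∂ₓu(t, x))² + 2·u(t, x)³ ) dx is constant. (Conservation of the KdV integral H₃.) -/
noncomputable def pd (v : ℝ × ℝ) (f : ℝ × ℝ → ℝ) : ℝ × ℝ → ℝ := fun p => fderiv ℝ f p v

lemma pd_contDiff (v : ℝ × ℝ) {f : ℝ × ℝ → ℝ} (hf : ContDiff ℝ (⊤ : ℕ∞) f) :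
    ContDiff ℝ (⊤ : ℕ∞) (pd v f) :=
  (hf.fderiv_right (by exact_mod_cast le_top)).clm_apply contDiff_const

lemma hasDerivAt_pd2 {f : ℝ × ℝ → ℝ} (hf : ContDiff ℝ (⊤ : ℕ∞) f) (t x : ℝ) :
    HasDerivAt (fun y => f (t, y)) (pd (0, 1) f (t, x)) x := by
  have h1 : HasDerivAt (fun y : ℝ => ((t, y) : ℝ × ℝ)) ((0 : ℝ), (1 : ℝ)) x :=
    (hasDerivAt_const x t).prodMk (hasDerivAt_id x)
  exact ((hf.differentiable (by simp) (t, x)).hasFDerivAt).comp_hasDerivAt x h1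

lemma hasDerivAt_pd1 {f : ℝ × ℝ → ℝ} (hf : ContDiff ℝ (⊤ : ℕ∞) f) (t x : ℝ) :
    HasDerivAt (fun s => f (s, x)) (pd (1, 0) f (t, x)) t := by
  have h1 : HasDerivAt (fun s : ℝ => ((s, x) : ℝ × ℝ)) ((1 : ℝ), (0 : ℝ)) t :=
    (hasDerivAt_id t).prodMk (hasDerivAt_const t x)
  exact ((hf.differentiable (by simp) (t, x)).hasFDerivAt).comp_hasDerivAt t h1

lemma pd_comm {f : ℝ × ℝ → ℝ} (hf : ContDiff ℝ (⊤ : ℕ∞) f) (v w : ℝ × ℝ) (p : ℝ × ℝ) :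
    pd w (pd v f) p = pd v (pd w f) p := by
  have hdf : DifferentiableAt ℝ (fderiv ℝ f) p :=
    ((hf.fderiv_right (m := (⊤:ℕ∞)) (by exact_mod_cast le_top)).differentiable
      (by simp)) p
  have key : ∀ a b : ℝ × ℝ, pd b (pd a f) p = fderiv ℝ (fderiv ℝ f) p b a := by
    intro a b
    show fderiv ℝ (fun q => (fderiv ℝ f q) a) p b = _
    rw [fderiv_clm_apply hdf (differentiableAt_const a)]
    simp
  rw [key v w, key w v]
  exact (hf.contDiffAt.isSymmSndFDerivAt
    (by rw [minSmoothness_of_isRCLikeNormedField]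
        rw [show ((2:WithTop ℕ∞)) = ((2:ℕ∞) : WithTop ℕ∞) by rfl]
        exact WithTop.coe_le_coe.mpr le_top)) w v

lemma pd_periodic {f : ℝ × ℝ → ℝ} (hf : ContDiff ℝ (⊤ : ℕ∞) f) (c : ℝ × ℝ)
    (hp : ∀ p, f (p + c) = f p) (v p) : pd v f (p + c) = pd v f p := by
  have h1 : HasFDerivAt (fun q => f (q + c))
      ((fderiv ℝ f (p + c)).comp (ContinuousLinearMap.id ℝ (ℝ × ℝ))) p :=
    ((hf.differentiable (by simp) (p + c)).hasFDerivAt).comp p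
      ((hasFDerivAt_id p).add_const c)
  have hfe : (fun q => f (q + c)) = f := funext hp
  rw [hfe] at h1
  show fderiv ℝ f (p + c) v = fderiv ℝ f p v
  rw [h1.fderiv]
  simp

lemma kdv_aux (T : ℝ) (hT : 0 < T) (F : ℝ × ℝ → ℝ) (hF : ContDiff ℝ (⊤ : ℕ∞) F)
    (hper : ∀ p : ℝ × ℝ, F (p + (0, T)) = F p)
    (hkdv : ∀ p : ℝ × ℝ, 4 * pd (1, 0) F p =
      6 * F p * pd (0, 1) F p - pd (0, 1) (pd (0, 1) (pd (0, 1) F)) p) :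
    ∀ t₁ t₂ : ℝ, (∫ x in (0:ℝ)..T, ((pd (0, 1) F (t₁, x)) ^ 2 + 2 * (F (t₁, x)) ^ 3)) =
      ∫ x in (0:ℝ)..T, ((pd (0, 1) F (t₂, x)) ^ 2 + 2 * (F (t₂, x)) ^ 3) := by
  intro t₁ t₂
  set u1 := pd (1, 0) F with hu1def
  set u2 := pd (0, 1) F with hu2def
  set u22 := pd (0, 1) u2 with hu22def
  set u222 := pd (0, 1) u22 with hu222def
  set u12 := pd (1, 0) u2 with hu12def
  set u21 := pd (0, 1) u1 with hu21def
  have hu1 : ContDiff ℝ (⊤ : ℕ∞) u1 := pd_contDiff _ hF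
  have hu2 : ContDiff ℝ (⊤ : ℕ∞) u2 := pd_contDiff _ hF
  have hu22 : ContDiff ℝ (⊤ : ℕ∞) u22 := pd_contDiff _ hu2
  have hu222 : ContDiff ℝ (⊤ : ℕ∞) u222 := pd_contDiff _ hu22
  have hu12 : ContDiff ℝ (⊤ : ℕ∞) u12 := pd_contDiff _ hu2
  have hu21 : ContDiff ℝ (⊤ : ℕ∞) u21 := pd_contDiff _ hu1
  have hFc : Continuous F := hF.continuous
  have hu1c : Continuous u1 := hu1.continuous
  have hu2c : Continuous u2 := hu2.continuous
  have hu22c : Continuous u22 := hu22.continuous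
  have hu222c : Continuous u222 := hu222.continuous
  have hu12c : Continuous u12 := hu12.continuous
  have hu21c : Continuous u21 := hu21.continuous
  -- periodicity
  have hu1per : ∀ p, u1 (p + (0, T)) = u1 p := pd_periodic hF _ hper _
  have hu2per : ∀ p, u2 (p + (0, T)) = u2 p := pd_periodic hF _ hper _
  have hu22per : ∀ p, u22 (p + (0, T)) = u22 p := pd_periodic hu2 _ hu2per _
  -- Clairaut
  have hcl : ∀ p, u12 p = u21 p := fun p => pd_comm hF (0, 1) (1, 0) p
  -- the integrand and its time derivative, the flux and its space derivative
  set I : ℝ × ℝ → ℝ := fun p => (u2 p) ^ 2 + 2 * (F p) ^ 3 with hIdef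
  set TD : ℝ × ℝ → ℝ := fun p => 2 * u2 p * u12 p + 6 * (F p) ^ 2 * u1 p with hTDdef
  set G : ℝ × ℝ → ℝ := fun p =>
    2 * u2 p * u1 p + (9 * (F p) ^ 4 - 6 * (F p) ^ 2 * u22 p + (u22 p) ^ 2) / 4 with hGdef
  set XD : ℝ × ℝ → ℝ := fun p =>
    (2 * u22 p * u1 p + 2 * u2 p * u21 p) +
      (36 * (F p) ^ 3 * u2 p - (12 * F p * u2 p * u22 p + 6 * (F p) ^ 2 * u222 p)
        + 2 * u22 p * u222 p) / 4 with hXDdef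
  have hIc : Continuous I := by
    rw [hIdef]; exact (hu2c.pow 2).add (continuous_const.mul (hFc.pow 3))
  have hTDc : Continuous TD := by
    rw [hTDdef]
    exact ((continuous_const.mul hu2c).mul hu12c).add
      ((continuous_const.mul (hFc.pow 2)).mul hu1c)
  have hXDc : Continuous XD := by
    rw [hXDdef]
    apply Continuous.add
    · exact ((continuous_const.mul hu22c).mul hu1c).add
        ((continuous_const.mul hu2c).mul hu21c)
    · exact (((((continuous_const.mul (hFc.pow 3)).mul hu2c).sub
        ((((continuous_const.mul hFc).mul hu2c).mul hu22c).add
          ((continuous_const.mul (hFc.pow 2)).mul hu222c))).add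
        ((continuous_const.mul hu22c).mul hu222c)).div_const 4)
  -- TD = XD pointwise using KdV and Clairaut
  have hTDXD : ∀ p, TD p = XD p := by
    intro p
    have h := hkdv p
    have hc := hcl p
    rw [hTDdef, hXDdef]
    dsimp only
    linear_combination (2 * u2 p) * hc + ((3/2) * (F p) ^ 2 - (1/2) * u22 p) * h
  -- time derivative of the integrand slice
  have hIt : ∀ t x, HasDerivAt (fun s => I (s, x)) (TD (t, x)) t := by
    intro t x
    have h2 : HasDerivAt (fun s => u2 (s, x)) (u12 (t, x)) t := hasDerivAt_pd1 hu2 t x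
    have hF1 : HasDerivAt (fun s => F (s, x)) (u1 (t, x)) t := hasDerivAt_pd1 hF t x
    have heq : (fun s => I (s, x)) = fun s => u2 (s, x) ^ 2 + 2 * F (s, x) ^ 3 := by
      funext s; simp only [hIdef]
    rw [heq]
    have := (h2.pow 2).add ((hF1.pow 3).const_mul 2)
    refine this.congr_deriv ?_
    rw [hTDdef]; dsimp only; push_cast; ring
  -- space derivative of the flux slice
  have hGx : ∀ t x, HasDerivAt (fun y => G (t, y)) (XD (t, x)) x := by
    intro t x
    have h2 : HasDerivAt (fun y => u2 (t, y)) (u22 (t, x)) x := hasDerivAt_pd2 hu2 t x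
    have h1 : HasDerivAt (fun y => u1 (t, y)) (u21 (t, x)) x := hasDerivAt_pd2 hu1 t x
    have hFd : HasDerivAt (fun y => F (t, y)) (u2 (t, x)) x := hasDerivAt_pd2 hF t x
    have h22 : HasDerivAt (fun y => u22 (t, y)) (u222 (t, x)) x := hasDerivAt_pd2 hu22 t x
    have heq : (fun y => G (t, y)) = fun y =>
        2 * u2 (t, y) * u1 (t, y) +
          (9 * F (t, y) ^ 4 - 6 * F (t, y) ^ 2 * u22 (t, y) + u22 (t, y) ^ 2) / 4 := by
      funext y; simp only [hGdef]
    rw [heq]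
    have :=
      (((h2.const_mul 2).mul h1)).add
        (((((hFd.pow 4).const_mul 9).sub (((hFd.pow 2).const_mul 6).mul h22)).add
          (h22.pow 2)).div_const 4)
    refine this.congr_deriv ?_
    rw [hXDdef]; dsimp only [Pi.pow_apply]; push_cast; ring
  -- ∫ XD over a period is zero
  have hflux : ∀ t : ℝ, (∫ x in (0:ℝ)..T, XD (t, x)) = 0 := by
    intro t
    have h1 : (∫ x in (0:ℝ)..T, XD (t, x)) = G (t, T) - G (t, 0) := by
      apply intervalIntegral.integral_eq_sub_of_hasDerivAt (fun x _ => hGx t x)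
      exact (hXDc.comp (Continuous.prodMk_right t)).intervalIntegrable 0 T
    have h2 : G (t, T) = G (t, 0) := by
      have hGper : G ((t, (0:ℝ)) + (0, T)) = G (t, (0:ℝ)) := by
        rw [hGdef]; dsimp only
        rw [hu2per, hu1per, hper, hu22per]
      simpa using hGper
    rw [h1, h2, sub_self]
  -- differentiation under the integral sign
  have key : ∀ t₀ : ℝ, HasDerivAt (fun t => ∫ x in (0:ℝ)..T, I (t, x)) 0 t₀ := by
    intro t₀
    obtain ⟨C, hC⟩ : ∃ C, ∀ p ∈ Metric.closedBall t₀ 1 ×ˢ Set.uIcc (0:ℝ) T, ‖TD p‖ ≤ C :=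
      ((isCompact_closedBall t₀ 1).prod isCompact_uIcc).exists_bound_of_continuousOn
        hTDc.continuousOn
    have hmain := intervalIntegral.hasDerivAt_integral_of_dominated_loc_of_deriv_le
      (F := fun t x => I (t, x)) (F' := fun t x => TD (t, x)) (bound := fun _ => C)
      (μ := MeasureTheory.volume) (a := (0:ℝ)) (b := T) (x₀ := t₀) (Metric.ball_mem_nhds t₀ one_pos)
      (Filter.Eventually.of_forall fun t =>
        ((hIc.comp (Continuous.prodMk_right t)).aestronglyMeasurable))
      ((hIc.comp (Continuous.prodMk_right t₀)).intervalIntegrable 0 T)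
      ((hTDc.comp (Continuous.prodMk_right t₀)).aestronglyMeasurable)
      (Filter.Eventually.of_forall fun x hx t ht =>
        hC (t, x) ⟨Metric.ball_subset_closedBall ht, Set.uIoc_subset_uIcc hx⟩)
      (intervalIntegrable_const)
      (Filter.Eventually.of_forall fun x _ t _ => hIt t x)
    have h0 : (∫ x in (0:ℝ)..T, TD (t₀, x)) = 0 := by
      rw [intervalIntegral.integral_congr (fun x _ => hTDXD (t₀, x))]
      exact hflux t₀
    rw [h0] at hmain
    exact hmain.2
  have hconst : ∀ a b : ℝ,
      (∫ x in (0:ℝ)..T, I (a, x)) = ∫ x in (0:ℝ)..T, I (b, x) := by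
    intro a b
    exact is_const_of_deriv_eq_zero (fun t => (key t).differentiableAt)
      (fun t => (key t).deriv) a b
  exact hconst t₁ t₂

/-- Conservation of the KdV integral `H₃`: if `u(t,x)` is smooth, `T`-periodic in `x`,
and satisfies the KdV equation `4 ∂ₜu = 6 u ∂ₓu - ∂ₓ³u`, then
`t ↦ ∫₀ᵀ ((∂ₓu(t,x))² + 2 u(t,x)³) dx` is constant. -/
theorem kdv_conservation_H3 (T : ℝ) (hT : 0 < T) (u : ℝ → ℝ → ℝ)
    (hu : ContDiff ℝ (⊤ : ℕ∞) (Function.uncurry u))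
    (hper : ∀ t x, u t (x + T) = u t x)
    (hkdv : ∀ t x, 4 * deriv (fun s => u s x) t =
      6 * u t x * deriv (u t) x - deriv (deriv (deriv (u t))) x) :
    ∀ t₁ t₂ : ℝ, (∫ x in (0:ℝ)..T, ((deriv (u t₁) x) ^ 2 + 2 * (u t₁ x) ^ 3)) =
      ∫ x in (0:ℝ)..T, ((deriv (u t₂) x) ^ 2 + 2 * (u t₂ x) ^ 3) := by
  intro t₁ t₂
  set F := Function.uncurry u with hFdef
  have hF : ContDiff ℝ (⊤ : ℕ∞) F := hu
  have huF : ∀ t x, u t x = F (t, x) := fun t x => rfl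
  have hper' : ∀ p : ℝ × ℝ, F (p + (0, T)) = F p := by
    intro p
    show u (p.1 + 0) (p.2 + T) = u p.1 p.2
    rw [add_zero]; exact hper p.1 p.2
  have hd2 : ∀ t x, deriv (u t) x = pd (0, 1) F (t, x) := fun t x =>
    (hasDerivAt_pd2 hF t x).deriv
  have hd_ut : ∀ t, deriv (u t) = fun y => pd (0, 1) F (t, y) := fun t =>
    funext fun x => hd2 t x
  have hd_ut2 : ∀ t, deriv (deriv (u t)) = fun y => pd (0, 1) (pd (0, 1) F) (t, y) := by
    intro t
    rw [hd_ut t]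
    exact funext fun x => (hasDerivAt_pd2 (pd_contDiff _ hF) t x).deriv
  have hd_ut3 : ∀ t x, deriv (deriv (deriv (u t))) x =
      pd (0, 1) (pd (0, 1) (pd (0, 1) F)) (t, x) := by
    intro t x
    rw [hd_ut2 t]
    exact (hasDerivAt_pd2 (pd_contDiff _ (pd_contDiff _ hF)) t x).deriv
  have hd1 : ∀ t x, deriv (fun s => u s x) t = pd (1, 0) F (t, x) := fun t x =>
    (hasDerivAt_pd1 hF t x).deriv
  have hkdv' : ∀ p : ℝ × ℝ, 4 * pd (1, 0) F p =
      6 * F p * pd (0, 1) F p - pd (0, 1) (pd (0, 1) (pd (0, 1) F)) p := by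
    intro p
    have h := hkdv p.1 p.2
    rw [hd1, hd2, hd_ut3] at h
    exact h
  have hmain := kdv_aux T hT F hF hper' hkdv' t₁ t₂
  simp only [hd_ut, huF]
  exact hmain
end
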